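/- For given positive integers d and l and a nonnegative integer k, there exists a positive integer M = M(d,k,l) such that for any sequence A_1, A_2, ..., A_M of d-tuples of nonnegative integers with |A_i| = k + i for each i, there exist indices 1 ≤ i_1 < i_2 < ... < i_l ≤ M with A_{i_1} ≼ A_{i_2} ≼ ... ≼ A_{i_l} (componentwise). -/

import Mathlib

namespace ChainAux

/-- A "bad" sequence of length `M`: sums are `k+i+1` and there is no chain of length `l`. -/
def Bad (d l k M : ℕ) (A : Fin M → (Fin d → ℕ)) : Prop :=
  (∀ i : Fin M, ∑ j, A i j = k + (i : ℕ) + 1) ∧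
  ∀ g : Fin l → Fin M, StrictMono g → ¬ Monotone (fun a => A (g a))

theorem bad_trunc {d l k M M' : ℕ} (h : M' ≤ M) {A : Fin M → (Fin d → ℕ)}
    (hA : Bad d l k M A) : Bad d l k M' (fun i => A (Fin.castLE h i)) := by
  constructor
  · intro i
    simpa using hA.1 (Fin.castLE h i)
  · intro g hg hmono
    refine hA.2 (fun a => Fin.castLE h (g a)) ?_ hmono
    intro x y hxy
    exact hg hxy

/-- `s` is extendable to bad sequences of every length. -/
def Ext (d l k n : ℕ) (s : Fin n → (Fin d → ℕ)) : Prop :=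
  ∀ N, ∀ h : n ≤ N, ∃ A : Fin N → (Fin d → ℕ),
    Bad d l k N A ∧ ∀ i : Fin n, A (Fin.castLE h i) = s i

theorem ext_step {d l k n : ℕ} {s : Fin n → (Fin d → ℕ)} (hs : Ext d l k n s) :
    ∃ a, Ext d l k (n + 1) (Fin.snoc s a) := by
  classical
  by_contra hno
  push_neg at hno
  have hkill : ∀ a : Fin d → ℕ, ∃ N, ∃ h : n + 1 ≤ N,
      ∀ A : Fin N → (Fin d → ℕ), Bad d l k N A →
        ∃ i : Fin (n+1), A (Fin.castLE h i) ≠ (Fin.snoc s a : Fin (n+1) → Fin d → ℕ) i := by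
    intro a
    have h1 := hno a
    unfold Ext at h1
    push_neg at h1
    exact h1
  choose Nf hNf hkill' using hkill
  set S : Finset (Fin d → ℕ) := Fintype.piFinset fun _ : Fin d => Finset.range (k + n + 2)
    with hS
  set Nmax := max (n + 1) (S.sup Nf) with hNmax
  have hn1 : n + 1 ≤ Nmax := le_max_left _ _
  obtain ⟨A, hAbad, hAext⟩ := hs Nmax (by omega)
  set a : Fin d → ℕ := A ⟨n, by omega⟩ with ha
  have hsum : ∑ j, a j = k + n + 1 := by simpa using hAbad.1 ⟨n, by omega⟩
  have haS : a ∈ S := by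
    simp only [hS, Fintype.mem_piFinset, Finset.mem_range]
    intro j
    have : a j ≤ ∑ j', a j' :=
      Finset.single_le_sum (fun _ _ => Nat.zero_le _) (Finset.mem_univ j)
    omega
  have hle : Nf a ≤ Nmax := le_trans (Finset.le_sup haS) (le_max_right _ _)
  obtain ⟨i, hi⟩ := hkill' a (fun i => A (Fin.castLE hle i)) (bad_trunc hle hAbad)
  apply hi
  have key : ∀ (i : Fin (n+1)) (h : (i : ℕ) < Nmax), A ⟨i, h⟩ = (Fin.snoc s a : Fin (n+1) → Fin d → ℕ) i := by
    intro i hil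
    by_cases hc : (i : ℕ) = n
    · have : i = Fin.last n := Fin.ext hc
      subst this
      rw [Fin.snoc_last]
      exact congrArg A (Fin.ext (by simp))
    · have hin : (i : ℕ) < n := lt_of_le_of_ne (Nat.lt_succ_iff.mp i.2) hc
      have h1 : i = Fin.castSucc ⟨(i : ℕ), hin⟩ := Fin.ext rfl
      conv_rhs => rw [h1, Fin.snoc_castSucc]
      have := hAext ⟨(i : ℕ), hin⟩
      rw [← this]
      exact congrArg A (Fin.ext rfl)
  exact key i (by omega)

theorem no_bad_all (d l k : ℕ) (hl : 0 < l)
    (hbad : ∀ M, ∃ A : Fin M → (Fin d → ℕ), Bad d l k M A) : False := by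
  classical
  have hext0 : Ext d l k 0 (fun i => i.elim0) := by
    intro N h
    obtain ⟨A, hA⟩ := hbad N
    exact ⟨A, hA, fun i => i.elim0⟩
  have hstep := fun n (s : Fin n → (Fin d → ℕ)) (hs : Ext d l k n s) => ext_step hs
  choose step hstep using hstep
  let T : (n : ℕ) → {s : Fin n → (Fin d → ℕ) // Ext d l k n s} :=
    fun n => Nat.rec ⟨fun i => i.elim0, hext0⟩
      (fun n p => ⟨Fin.snoc p.1 (step n p.1 p.2), hstep n p.1 p.2⟩) n
  let f : ℕ → (Fin d → ℕ) := fun n => (T (n+1)).1 (Fin.last n)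
  have coh : ∀ m (i : Fin m), (T m).1 i = f (i : ℕ) := by
    intro m
    induction m with
    | zero => exact fun i => i.elim0
    | succ m ih =>
      intro i
      refine Fin.lastCases ?_ ?_ i
      · rfl
      · intro j
        have h1 : (T (m+1)).1 = Fin.snoc (T m).1 (step m (T m).1 (T m).2) := rfl
        rw [h1, Fin.snoc_castSucc, ih j]
        simp
  have hsum : ∀ n, ∑ j, f n j = k + n + 1 := by
    intro n
    obtain ⟨A, hAbad, hAext⟩ := (T (n+1)).2 (n+1) le_rfl
    have h1 : A (Fin.castLE le_rfl (Fin.last n)) = (T (n+1)).1 (Fin.last n) :=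
      hAext (Fin.last n)
    have h2 := hAbad.1 (Fin.castLE le_rfl (Fin.last n))
    rw [h1] at h2
    exact h2
  haveI inst : ∀ _i : Fin d, IsWellOrder ℕ (· < ·) := fun _ => inferInstance
  have hpwo : (Set.univ : Set (Fin d → ℕ)).IsPWO :=
    by simpa using Set.IsPWO.pi (ι := Fin d) (α := fun _ => ℕ) (s := fun _ => Set.univ) (fun _ => Set.isPWO_univ_iff.mpr inferInstance)
  obtain ⟨g, hg⟩ := hpwo.exists_monotone_subseq (f := f) (fun n => Set.mem_univ _)
  set N := g (l - 1) + 1 with hN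
  obtain ⟨A, hAbad, hAext⟩ := (T N).2 N le_rfl
  have hAf : ∀ i : Fin N, A i = f (i : ℕ) := by
    intro i
    have h1 := hAext i
    rw [coh] at h1
    rw [← h1]
    exact congrArg A (Fin.ext rfl)
  have hlt : ∀ a : Fin l, g (a : ℕ) < N := by
    intro a
    have h1 : (a : ℕ) ≤ l - 1 := by omega
    have := g.monotone h1
    omega
  refine hAbad.2 (fun a => ⟨g (a : ℕ), hlt a⟩) ?_ ?_
  · intro x y hxy
    simp only [Fin.lt_def]
    exact g.strictMono (Fin.lt_def.mp hxy)
  · intro x y hxy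
    show A ⟨g (x : ℕ), _⟩ ≤ A ⟨g (y : ℕ), _⟩
    rw [hAf, hAf]
    exact hg (show (x : ℕ) ≤ (y : ℕ) from hxy)

end ChainAux

/-- For positive integers `d`, `l` and a nonnegative integer `k`, there is a
positive integer `M` such that every sequence `A_1, …, A_M` of `d`-tuples of
nonnegative integers with `|A_i| = k + i` contains a chain
`A_{i_1} ≼ A_{i_2} ≼ ⋯ ≼ A_{i_l}` (componentwise) of length `l`. -/
theorem exists_ramsey_number_for_chains (d l : ℕ) (hd : 0 < d) (hl : 0 < l) (k : ℕ) :
    ∃ M : ℕ, 0 < M ∧ ∀ A : Fin M → (Fin d → ℕ),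
      (∀ i : Fin M, ∑ j, A i j = k + (i : ℕ) + 1) →
      ∃ g : Fin l → Fin M, StrictMono g ∧ Monotone (fun a => A (g a)) := by
  by_contra hcon
  push_neg at hcon
  apply ChainAux.no_bad_all d l k hl
  intro M
  obtain ⟨A, hA1, hA2⟩ := hcon (M + 1) (Nat.succ_pos M)
  exact ⟨_, ChainAux.bad_trunc (Nat.le_succ M) ⟨hA1, hA2⟩⟩
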